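/- Let r ≥ 2 and let C be a Steiner system S(2,r,r²), i.e., an r-uniform hypergraph on a vertex set of size r² in which every pair of distinct vertices is contained in exactly one hyperedge. Then C contains no copy of B_4^r: there do not exist four distinct hyperedges e_1, e_2, e_3, f of C and a vertex v with v ∈ e_1 ∩ e_2 ∩ e_3, v ∉ f, f ∩ e_1 ≠ ∅, f ∩ e_2 = ∅, and f ∩ e_3 = ∅. -/
import Mathlib


/-- A Steiner system S(2,r,r²) contains no copy of B_4^r. -/
theorem stmt_9 {V : Type*} [Fintype V] [DecidableEq V]
    (r : ℕ) (hr : 2 ≤ r)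
    (hcard : Fintype.card V = r ^ 2)
    (E : Finset (Finset V))
    (huniform : ∀ e ∈ E, e.card = r)
    (hsteiner : ∀ u v : V, u ≠ v → ∃! e, e ∈ E ∧ u ∈ e ∧ v ∈ e) :
    ¬ ∃ e₁ ∈ E, ∃ e₂ ∈ E, ∃ e₃ ∈ E, ∃ f ∈ E, ∃ v : V,
      e₁ ≠ e₂ ∧ e₁ ≠ e₃ ∧ e₁ ≠ f ∧ e₂ ≠ e₃ ∧ e₂ ≠ f ∧ e₃ ≠ f ∧
      v ∈ e₁ ∧ v ∈ e₂ ∧ v ∈ e₃ ∧ v ∉ f ∧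
      (f ∩ e₁).Nonempty ∧ f ∩ e₂ = ∅ ∧ f ∩ e₃ = ∅ := by
  rintro ⟨e₁, he₁, e₂, he₂, e₃, he₃, f, hf, v, h12, h13, h1f, h23, h2f, h3f,
    hv1, hv2, hv3, hvf, hfe₁, hfe₂, hfe₃⟩
  classical
  -- L : lines through v
  set L : Finset (Finset V) := E.filter (fun e => v ∈ e) with hL
  have hmemL : ∀ e, e ∈ L ↔ e ∈ E ∧ v ∈ e := by
    intro e; simp [hL]
  -- two distinct lines through v meet only at v
  have huniq : ∀ e ∈ L, ∀ e' ∈ L, ∀ x, x ≠ v → x ∈ e → x ∈ e' → e = e' := by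
    intro e he e' he' x hx hxe hxe'
    rw [hmemL] at he he'
    obtain ⟨w, hw, hwuniq⟩ := hsteiner v x (Ne.symm hx)
    rw [hwuniq e ⟨he.1, he.2, hxe⟩, hwuniq e' ⟨he'.1, he'.2, hxe'⟩]
  -- |L| ≤ r + 1 by counting points
  have hdisj : (L : Set (Finset V)).PairwiseDisjoint (fun e => e.erase v) := by
    intro e he e' he' hne
    simp only [Finset.disjoint_left]
    intro x hx hx'
    exact hne (huniq e he e' he' x (Finset.ne_of_mem_erase hx)
      (Finset.mem_of_mem_erase hx) (Finset.mem_of_mem_erase hx'))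
  have hsum : L.card * (r - 1) ≤ r ^ 2 - 1 := by
    have hb : (L.biUnion (fun e => e.erase v)).card = L.card * (r - 1) := by
      rw [Finset.card_biUnion hdisj]
      rw [Finset.sum_congr rfl (fun e he => ?_), Finset.sum_const, smul_eq_mul]
      rw [hmemL] at he
      rw [Finset.card_erase_of_mem he.2, huniform e he.1]
    have hsub : L.biUnion (fun e => e.erase v) ⊆ Finset.univ.erase v := by
      intro x hx
      simp only [Finset.mem_biUnion] at hx
      obtain ⟨e, _, hxe⟩ := hx
      exact Finset.mem_erase.2 ⟨Finset.ne_of_mem_erase hxe, Finset.mem_univ x⟩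
    calc L.card * (r - 1) = (L.biUnion (fun e => e.erase v)).card := hb.symm
      _ ≤ (Finset.univ.erase v).card := Finset.card_le_card hsub
      _ = r ^ 2 - 1 := by
          rw [Finset.card_erase_of_mem (Finset.mem_univ v), Finset.card_univ, hcard]
  have hLle : L.card ≤ r + 1 := by
    have h1 : 1 ≤ r := le_trans (by norm_num) hr
    have : L.card * (r - 1) ≤ (r + 1) * (r - 1) := by
      refine le_trans hsum ?_
      have h2 : (r + 1) * (r - 1) = r ^ 2 - 1 := by
        cases' Nat.exists_eq_add_of_le h1 with k hk
        subst hk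
        simp only [Nat.add_sub_cancel_left]
        have : (1 + k) ^ 2 = k ^ 2 + 2 * k + 1 := by ring
        rw [this]
        ring_nf
        omega
      omega
    have hr1 : 0 < r - 1 := by omega
    exact Nat.le_of_mul_le_mul_right this hr1
  -- the map sending x ∈ f to the line through v and x
  have hvne : ∀ x ∈ f, v ≠ x := fun x hx h => hvf (h ▸ hx)
  set g : V → Finset V := fun x =>
    if h : v ≠ x then (hsteiner v x h).choose else ∅ with hg
  have hgspec : ∀ x ∈ f, (g x ∈ E ∧ v ∈ g x ∧ x ∈ g x) ∧
      ∀ e, e ∈ E ∧ v ∈ e ∧ x ∈ e → e = g x := by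
    intro x hx
    have h := hvne x hx
    have := (hsteiner v x h).choose_spec
    simp only [hg, dif_pos h]
    exact ⟨this.1, this.2⟩
  have hgL : ∀ x ∈ f, g x ∈ L := by
    intro x hx
    exact (hmemL _).2 ⟨(hgspec x hx).1.1, (hgspec x hx).1.2.1⟩
  -- g is injective on f
  have hginj : Set.InjOn g f := by
    intro x hx y hy hxy
    by_contra hne
    obtain ⟨w, hw, hwuniq⟩ := hsteiner x y hne
    have hx' : x ∈ g x := (hgspec x hx).1.2.2
    have hy' : y ∈ g x := hxy ▸ (hgspec y hy).1.2.2
    have h1 : f = w := hwuniq f ⟨hf, hx, hy⟩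
    have h2 : g x = w := hwuniq (g x) ⟨(hgspec x hx).1.1, hx', hy'⟩
    have : v ∈ f := by rw [h1, ← h2]; exact (hgspec x hx).1.2.1
    exact hvf this
  -- g x ≠ e₂, e₃ since g x meets f
  have hgne2 : ∀ x ∈ f, g x ≠ e₂ := by
    intro x hx h
    have : x ∈ f ∩ e₂ := Finset.mem_inter.2 ⟨hx, h ▸ (hgspec x hx).1.2.2⟩
    rw [hfe₂] at this; exact absurd this (Finset.notMem_empty x)
  have hgne3 : ∀ x ∈ f, g x ≠ e₃ := by
    intro x hx h
    have : x ∈ f ∩ e₃ := Finset.mem_inter.2 ⟨hx, h ▸ (hgspec x hx).1.2.2⟩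
    rw [hfe₃] at this; exact absurd this (Finset.notMem_empty x)
  -- build a subset of L of size r + 2
  have hsub : insert e₂ (insert e₃ (f.image g)) ⊆ L := by
    intro e he
    rcases Finset.mem_insert.1 he with rfl | he
    · exact (hmemL _).2 ⟨he₂, hv2⟩
    rcases Finset.mem_insert.1 he with rfl | he
    · exact (hmemL _).2 ⟨he₃, hv3⟩
    obtain ⟨x, hx, rfl⟩ := Finset.mem_image.1 he
    exact hgL x hx
  have hcard2 : (insert e₂ (insert e₃ (f.image g))).card = r + 2 := by
    rw [Finset.card_insert_of_notMem, Finset.card_insert_of_notMem,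
      Finset.card_image_of_injOn hginj, huniform f hf]
    · intro h
      obtain ⟨x, hx, hxg⟩ := Finset.mem_image.1 h
      exact hgne3 x hx hxg
    · intro h
      rcases Finset.mem_insert.1 h with h | h
      · exact h23 h
      · obtain ⟨x, hx, hxg⟩ := Finset.mem_image.1 h
        exact hgne2 x hx hxg
  have := Finset.card_le_card hsub
  rw [hcard2] at this
  omega
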